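/- Let n be an odd natural number, let a ∈ ℤ^n have support of size t with 1 ≤ t ≤ ⌊n/2⌋, and let b ∈ ℤ. Then the number of vectors x ∈ ℝ^n such that exactly one coordinate of x equals 1/2, all other coordinates are in {0,1}, ∑_{i=1}^n x_i = n/2, and b < ⟨a, x⟩ < b + 1, is at most p(n,t) := t · C(t−1, ⌊t/2⌋) · C(n−t, (n−1)/2 − ⌊t/2⌋). -/

import Mathlib

open Finset
open scoped symmDiff

lemma littlewood_offord {α : Type*} [DecidableEq α] (s : Finset α) (f : α → ℤ)
    (hf : ∀ i ∈ s, f i ≠ 0) (c : ℤ) :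
    ((s.powerset.filter fun B => ∑ i ∈ B, f i = c)).card ≤ s.card.choose (s.card / 2) := by
  classical
  set N := s.filter (fun i => f i < 0) with hN
  set g : α → ℤ := fun i => |f i| with hg
  set P := s.powerset.filter (fun B => ∑ i ∈ B, f i = c) with hP
  have hNs : N ⊆ s := filter_subset _ _
  have key : ∀ B ⊆ s, ∑ i ∈ (B ∆ N), g i = ∑ i ∈ B, f i + ∑ i ∈ N, g i := by
    intro B hB
    have hdisj : Disjoint (B \ N) (N \ B) := disjoint_sdiff_sdiff
    rw [symmDiff_def, Finset.sup_eq_union, Finset.sum_union hdisj]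
    have h1 : ∑ i ∈ B \ N, g i = ∑ i ∈ B \ N, f i := by
      refine Finset.sum_congr rfl fun i hi => ?_
      rw [Finset.mem_sdiff] at hi
      have : ¬ f i < 0 := fun h => hi.2 (Finset.mem_filter.2 ⟨hB hi.1, h⟩)
      simp [hg, abs_of_nonneg (not_lt.1 this)]
    have h2 : ∑ i ∈ N \ B, g i = -∑ i ∈ N \ B, f i := by
      rw [← Finset.sum_neg_distrib]
      refine Finset.sum_congr rfl fun i hi => ?_
      rw [Finset.mem_sdiff, hN, Finset.mem_filter] at hi
      simp [hg, abs_of_neg hi.1.2]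
    have h3 : ∑ i ∈ B ∩ N, f i + ∑ i ∈ B \ N, f i = ∑ i ∈ B, f i :=
      Finset.sum_inter_add_sum_sdiff _ _ _
    have h4 : ∑ i ∈ N ∩ B, g i + ∑ i ∈ N \ B, g i = ∑ i ∈ N, g i :=
      Finset.sum_inter_add_sum_sdiff _ _ _
    have h5 : ∑ i ∈ N ∩ B, g i = -∑ i ∈ B ∩ N, f i := by
      rw [Finset.inter_comm, ← Finset.sum_neg_distrib]
      refine Finset.sum_congr rfl fun i hi => ?_
      rw [Finset.mem_inter, hN, Finset.mem_filter] at hi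
      simp [hg, abs_of_neg hi.2.2]
    linarith
  -- subsets of s have symmetric difference with N inside s
  have hsub : ∀ B ∈ P, B ∆ N ⊆ s := by
    intro B hB i hi
    have hBs : B ⊆ s := mem_powerset.1 (mem_filter.1 hB).1
    rcases Finset.mem_symmDiff.1 hi with ⟨h, _⟩ | ⟨h, _⟩
    exacts [hBs h, hNs h]
  set ψ : Finset α → Finset {x // x ∈ s} := fun B => B.subtype (· ∈ s) with hψ
  set 𝒜 := P.image (fun B => ψ (B ∆ N)) with h𝒜
  have hrec : ∀ B ∈ P, (ψ (B ∆ N)).map (Function.Embedding.subtype _) = B ∆ N := by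
    intro B hB
    exact Finset.subtype_map_of_mem (fun x hx => hsub B hB hx)
  have hmono : ∀ B ∈ P, ∀ C ∈ P, ψ (B ∆ N) ⊆ ψ (C ∆ N) → B ∆ N ⊆ C ∆ N := by
    intro B hB C hC h i hi
    have hi' : (⟨i, hsub B hB hi⟩ : {x // x ∈ s}) ∈ ψ (B ∆ N) := Finset.mem_subtype.2 hi
    exact Finset.mem_subtype.1 (h hi')
  have hcard : 𝒜.card = P.card := by
    rw [h𝒜]
    apply Finset.card_image_of_injOn
    intro B hB C hC hBC
    have : B ∆ N = C ∆ N := by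
      rw [← hrec B hB, ← hrec C hC]
      exact congrArg _ hBC
    have := congrArg (fun D => D ∆ N) this
    simpa [symmDiff_symmDiff_cancel_right] using this
  have hanti : IsAntichain (· ⊆ ·) (𝒜 : Set (Finset {x // x ∈ s})) := by
    rintro X hX Y hY hne hsubset
    simp only [h𝒜, coe_image, Set.mem_image, mem_coe] at hX hY
    obtain ⟨B, hB, rfl⟩ := hX
    obtain ⟨C, hC, rfl⟩ := hY
    have hBC : B ∆ N ⊆ C ∆ N := hmono B hB C hC hsubset
    have hBCne : B ∆ N ≠ C ∆ N := fun h => hne (by rw [h])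
    obtain ⟨i, hiC, hiB⟩ := Finset.exists_of_ssubset (hBC.ssubset_of_ne hBCne)
    have hlt : ∑ i ∈ (B ∆ N), g i < ∑ i ∈ (C ∆ N), g i := by
      refine Finset.sum_lt_sum_of_subset hBC hiC hiB ?_ ?_
      · exact abs_pos.2 (hf i (hsub C hC hiC))
      · intro j _ _; exact abs_nonneg _
    have e1 := key B (mem_powerset.1 (mem_filter.1 hB).1)
    have e2 := key C (mem_powerset.1 (mem_filter.1 hC).1)
    have sB : ∑ i ∈ B, f i = c := (mem_filter.1 hB).2
    have sC : ∑ i ∈ C, f i = c := (mem_filter.1 hC).2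
    rw [e1, e2, sB, sC] at hlt
    exact lt_irrefl _ hlt
  have := IsAntichain.sperner hanti
  rw [hcard] at this
  simpa [Fintype.card_coe] using this

theorem split_set_vertices_bound (n : ℕ) (hn : Odd n) (a : Fin n → ℤ)
    (t : ℕ) (hT : (Finset.univ.filter (fun i => a i ≠ 0)).card = t)
    (ht1 : 1 ≤ t) (ht2 : t ≤ n / 2) (b : ℤ) :
    Set.ncard {x : Fin n → ℝ |
        (∃ ℓ : Fin n, x ℓ = 1 / 2 ∧ ∀ i, i ≠ ℓ → (x i = 0 ∨ x i = 1)) ∧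
        ∑ i, x i = (n : ℝ) / 2 ∧
        (b : ℝ) < ∑ i, (a i : ℝ) * x i ∧ ∑ i, (a i : ℝ) * x i < (b : ℝ) + 1}
      ≤ t * ((t - 1).choose (t / 2) * (n - t).choose ((n - 1) / 2 - t / 2)) := by
  classical
  obtain ⟨k, hk⟩ := hn
  set m := (n - 1) / 2 with hm
  set supp := Finset.univ.filter (fun i => a i ≠ 0) with hsuppdef
  set F : Finset (Fin n × Finset (Fin n)) := Finset.univ.filter
    (fun p => p.1 ∉ p.2 ∧ p.2.card = m ∧ a p.1 + 2 * ∑ i ∈ p.2, a i = 2*b+1) with hFdef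
  set g : Fin n × Finset (Fin n) → (Fin n → ℝ) :=
    fun p i => if i = p.1 then 1/2 else if i ∈ p.2 then 1 else 0 with hgdef
  -- Step 1: the set injects into F
  have hsubset : {x : Fin n → ℝ |
        (∃ ℓ : Fin n, x ℓ = 1 / 2 ∧ ∀ i, i ≠ ℓ → (x i = 0 ∨ x i = 1)) ∧
        ∑ i, x i = (n : ℝ) / 2 ∧
        (b : ℝ) < ∑ i, (a i : ℝ) * x i ∧ ∑ i, (a i : ℝ) * x i < (b : ℝ) + 1}
      ⊆ ↑(F.image g) := by
    rintro x ⟨⟨ℓ, hℓ, hoth⟩, hsum, hlow, hhigh⟩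
    set A := Finset.univ.filter (fun i => x i = 1) with hA
    have hmemA : ∀ i, i ∈ A ↔ x i = 1 := by
      intro i; simp [hA]
    have hℓA : ℓ ∉ A := by
      rw [hmemA]; rw [hℓ]; norm_num
    have herase : ∀ i ∈ Finset.univ.erase ℓ, x i = if i ∈ A then (1:ℝ) else 0 := by
      intro i hi
      have hne := (Finset.mem_erase.1 hi).1
      rcases hoth i hne with h0 | h1
      · rw [if_neg (fun hiA => by rw [(hmemA i).1 hiA] at h0; norm_num at h0), h0]
      · rw [if_pos ((hmemA i).2 h1), h1]
    have hsplit : ∑ i, x i = x ℓ + ∑ i ∈ Finset.univ.erase ℓ, x i :=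
      (Finset.add_sum_erase _ _ (Finset.mem_univ ℓ)).symm
    have hcount : ∑ i ∈ Finset.univ.erase ℓ, x i = (A.card : ℝ) := by
      rw [Finset.sum_congr rfl herase]
      rw [Finset.sum_ite_mem]
      have : Finset.univ.erase ℓ ∩ A = A := by
        ext i
        simp only [Finset.mem_inter, Finset.mem_erase, Finset.mem_univ, and_true, true_and]
        constructor
        · exact fun h => h.2
        · exact fun h => ⟨fun he => hℓA (he ▸ h), h⟩
      rw [this, Finset.sum_const, nsmul_eq_mul, mul_one]
    have hAcard : A.card = m := by
      rw [hsplit, hℓ, hcount] at hsum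
      have h2 : (2 * A.card + 1 : ℝ) = (n : ℝ) := by linarith
      have h3 : 2 * A.card + 1 = n := by exact_mod_cast h2
      omega
    -- weighted sum
    have heraseW : ∀ i ∈ Finset.univ.erase ℓ, (a i : ℝ) * x i = if i ∈ A then (a i : ℝ) else 0 := by
      intro i hi
      rw [herase i hi]
      by_cases hiA : i ∈ A
      · rw [if_pos hiA, if_pos hiA, mul_one]
      · rw [if_neg hiA, if_neg hiA, mul_zero]
    have hsplitW : ∑ i, (a i : ℝ) * x i = (a ℓ : ℝ) * x ℓ + ∑ i ∈ Finset.univ.erase ℓ, (a i : ℝ) * x i :=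
      (Finset.add_sum_erase _ _ (Finset.mem_univ ℓ)).symm
    have hcountW : ∑ i ∈ Finset.univ.erase ℓ, (a i : ℝ) * x i = ((∑ i ∈ A, a i : ℤ) : ℝ) := by
      rw [Finset.sum_congr rfl heraseW, Finset.sum_ite_mem]
      have : Finset.univ.erase ℓ ∩ A = A := by
        ext i
        simp only [Finset.mem_inter, Finset.mem_erase, Finset.mem_univ, and_true, true_and]
        constructor
        · exact fun h => h.2
        · exact fun h => ⟨fun he => hℓA (he ▸ h), h⟩
      rw [this]; push_cast; ring
    have heq : a ℓ + 2 * ∑ i ∈ A, a i = 2*b+1 := by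
      rw [hsplitW, hℓ, hcountW] at hlow hhigh
      have l1 : (2*b : ℤ) < a ℓ + 2 * ∑ i ∈ A, a i := by
        have : (2*(b:ℝ) : ℝ) < (a ℓ : ℝ) + 2 * ((∑ i ∈ A, a i : ℤ) : ℝ) := by linarith
        exact_mod_cast this
      have l2 : a ℓ + 2 * ∑ i ∈ A, a i < 2*b + 2 := by
        have : ((a ℓ : ℝ) + 2 * ((∑ i ∈ A, a i : ℤ) : ℝ) : ℝ) < 2*(b:ℝ) + 2 := by linarith
        exact_mod_cast this
      omega
    refine Finset.mem_coe.2 (Finset.mem_image.2 ⟨(ℓ, A), ?_, ?_⟩)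
    · rw [hFdef, Finset.mem_filter]
      exact ⟨Finset.mem_univ _, hℓA, hAcard, heq⟩
    · funext i
      show (if i = ℓ then (1:ℝ)/2 else if i ∈ A then 1 else 0) = x i
      by_cases hi : i = ℓ
      · rw [if_pos hi, hi, hℓ]
      · rw [if_neg hi]
        rcases hoth i hi with h0 | h1
        · rw [if_neg (fun hiA => by rw [(hmemA i).1 hiA] at h0; norm_num at h0), h0]
        · rw [if_pos ((hmemA i).2 h1), h1]
  -- Step 2: inject F into a sigma set
  set LO : Fin n → Finset (Finset (Fin n)) := fun ℓ =>
    ((supp.erase ℓ).powerset).filter (fun B => ∑ i ∈ B, 2 * a i = 2*b+1 - a ℓ) with hLOdef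
  set T := supp.sigma (fun ℓ => (LO ℓ).sigma
      (fun B => (suppᶜ.powersetCard (m - B.card)))) with hTdef
  have step2 : F.card ≤ T.card := by
    apply Finset.card_le_card_of_injOn (fun p : Fin n × Finset (Fin n) =>
      (⟨p.1, p.2 ∩ supp, p.2 \ supp⟩ : (_ : Fin n) × (_ : Finset (Fin n)) × Finset (Fin n)))
    · intro p hp
      obtain ⟨hp1, hp2, hp3⟩ := (Finset.mem_filter.1 hp).2
      have hne0 : a p.1 ≠ 0 := fun h => by rw [h] at hp3; omega
      have hsum0 : ∑ i ∈ p.2 ∩ supp, a i = ∑ i ∈ p.2, a i := by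
        apply Finset.sum_subset Finset.inter_subset_left
        intro i hi hni
        by_contra hai
        exact hni (Finset.mem_inter.2 ⟨hi, by simp [hsuppdef, hai]⟩)
      rw [hTdef]
      refine Finset.mem_sigma.2 ⟨?_, Finset.mem_sigma.2 ⟨?_, ?_⟩⟩
      · show p.1 ∈ supp
        simp [hsuppdef, hne0]
      · show p.2 ∩ supp ∈ LO p.1
        rw [hLOdef]
        simp only [Finset.mem_filter, Finset.mem_powerset]
        constructor
        · intro i hi
          obtain ⟨hi2, hisupp⟩ := Finset.mem_inter.1 hi
          exact Finset.mem_erase.2 ⟨fun h => hp1 (h ▸ hi2), hisupp⟩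
        · rw [← Finset.mul_sum]
          rw [hsum0]; omega
      · show p.2 \ supp ∈ suppᶜ.powersetCard (m - (p.2 ∩ supp).card)
        rw [Finset.mem_powersetCard]
        refine ⟨fun i hi => Finset.mem_compl.2 (Finset.mem_sdiff.1 hi).2, ?_⟩
        have hc := Finset.card_inter_add_card_sdiff p.2 supp
        omega
    · intro p hp q hq h
      have h1 : p.1 = q.1 := congrArg (fun z => z.1) h
      have h2 : p.2 ∩ supp = q.2 ∩ supp := congrArg (fun z => z.2.1) h
      have h3 : p.2 \ supp = q.2 \ supp := congrArg (fun z => z.2.2) h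
      have : p.2 = q.2 := by
        rw [← Finset.sdiff_union_inter p.2 supp, ← Finset.sdiff_union_inter q.2 supp, h2, h3]
      exact Prod.ext h1 this
  -- Step 3: count T
  have hcompl : suppᶜ.card = n - t := by
    rw [Finset.card_compl, hT]
    simp
  have hTcard : T.card = ∑ ℓ ∈ supp, ∑ B ∈ LO ℓ, (n - t).choose (m - B.card) := by
    rw [hTdef, Finset.card_sigma]
    refine Finset.sum_congr rfl fun ℓ _ => ?_
    rw [Finset.card_sigma]
    refine Finset.sum_congr rfl fun B _ => ?_
    rw [Finset.card_powersetCard, hcompl]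
  have hchoose : (t-1).choose ((t-1)/2) = (t-1).choose (t/2) := by
    rcases Nat.even_or_odd t with he | ho
    · obtain ⟨j, hj⟩ := he
      have h1 : t/2 = (t-1) - (t-1)/2 := by omega
      rw [h1, Nat.choose_symm (by omega)]
    · have h1 : t/2 = (t-1)/2 := by
        obtain ⟨j, hj⟩ := ho
        omega
      rw [h1]
  have inner : ∀ ℓ ∈ supp, ∑ B ∈ LO ℓ, (n - t).choose (m - B.card)
      ≤ (t-1).choose (t/2) * (n-t).choose (m - t/2) := by
    intro ℓ hℓ
    have hb : ∀ B ∈ LO ℓ, (n - t).choose (m - B.card) ≤ (n - t).choose (m - t/2) := by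
      intro B _
      have h1 := Nat.choose_le_middle (m - B.card) (n - t)
      have hhalf : (n - t)/2 = m - t/2 := by omega
      rwa [hhalf] at h1
    calc ∑ B ∈ LO ℓ, (n - t).choose (m - B.card)
        ≤ (LO ℓ).card * (n-t).choose (m - t/2) := by
          simpa using Finset.sum_le_card_nsmul _ _ _ hb
      _ ≤ (t-1).choose (t/2) * (n-t).choose (m - t/2) := by
          apply Nat.mul_le_mul_right
          have hle := littlewood_offord (supp.erase ℓ) (fun i => 2 * a i)
            (fun i hi => by
              have : a i ≠ 0 := by
                have h2 := Finset.mem_of_mem_erase hi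
                rw [hsuppdef] at h2
                exact (Finset.mem_filter.1 h2).2
              show (2 : ℤ) * a i ≠ 0
              omega)
            (2*b+1 - a ℓ)
          have hcard : (supp.erase ℓ).card = t - 1 := by
            rw [Finset.card_erase_of_mem hℓ, hT]
          rw [hcard, hchoose] at hle
          simpa [hLOdef] using hle
  calc Set.ncard _ ≤ Set.ncard ↑(F.image g) :=
        Set.ncard_le_ncard hsubset (Finset.finite_toSet _)
    _ = (F.image g).card := Set.ncard_coe_finset _
    _ ≤ F.card := Finset.card_image_le
    _ ≤ T.card := step2
    _ = ∑ ℓ ∈ supp, ∑ B ∈ LO ℓ, (n - t).choose (m - B.card) := hTcard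
    _ ≤ ∑ _ℓ ∈ supp, (t-1).choose (t/2) * (n-t).choose (m - t/2) := Finset.sum_le_sum inner
    _ = t * ((t-1).choose (t/2) * (n-t).choose (m - t/2)) := by
        rw [Finset.sum_const, hT, smul_eq_mul]
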